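/- Let μ be a partition of n, ζ a corner cell of μ, and ν = μ∖{ζ}. Then in ℚ(q,t) the Pieri coefficient d_{μν}(q,t) := ∏_{α∈Row(ζ)} (q^{a_μ(α)−1} − t^{l_μ(α)+1})/(q^{a_μ(α)} − t^{l_μ(α)+1}) · ∏_{α∈Col(ζ)} (t^{l_μ(α)−1} − q^{a_μ(α)+1})/(t^{l_μ(α)} − q^{a_μ(α)+1}) satisfies the identity t^{l′(ζ)} q^{a′(ζ)} · d_{μν}(q,t) = (1−t)(1−q) · Π_ν / Π_{μ,ν}. -/

import Mathlib

open MvPolynomial Finset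

noncomputable section

/-- The field `ℚ(q,t)` of rational functions in two indeterminates over `ℚ`. -/
abbrev K : Type := FractionRing (MvPolynomial (Fin 2) ℚ)

/-- The indeterminate `q` in `ℚ(q,t)`. -/
def qq : K := algebraMap (MvPolynomial (Fin 2) ℚ) K (X 0)

/-- The indeterminate `t` in `ℚ(q,t)`. -/
def tt : K := algebraMap (MvPolynomial (Fin 2) ℚ) K (X 1)

/-- The arm `a_μ(i,j) = μ_{i+1} - 1 - j` of a cell of `μ` (as an integer). -/
def arm (μ : YoungDiagram) (c : ℕ × ℕ) : ℤ := (μ.rowLen c.1 : ℤ) - 1 - c.2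

/-- The leg of a cell of `μ` (as an integer). -/
def leg (μ : YoungDiagram) (c : ℕ × ℕ) : ℤ := (μ.colLen c.2 : ℤ) - 1 - c.1

/-- A corner cell of `μ`: a cell with arm and leg both zero. -/
def IsCornerCell (μ : YoungDiagram) (c : ℕ × ℕ) : Prop :=
  c ∈ μ ∧ arm μ c = 0 ∧ leg μ c = 0

/-- `Π_μ = ∏_{α∈μ} (1 - t^{1+l(α)} q^{-a(α)})(1 - t^{-l(α)} q^{1+a(α)})`. -/
def PiMu (μ : YoungDiagram) : K :=
  ∏ α ∈ μ.cells,
    ((1 - tt ^ (1 + leg μ α) * qq ^ (-(arm μ α))) *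
      (1 - tt ^ (-(leg μ α)) * qq ^ (1 + arm μ α)))

/-- `Π_{μ,ν} = (1-t)(1-q)·P₁·P₂·P₃` attached to a corner cell `ζ` of `μ`. -/
def PiMuNu (μ : YoungDiagram) (ζ : ℕ × ℕ) : K :=
  (1 - tt) * (1 - qq) *
    (∏ α ∈ μ.cells.filter (fun α => α.1 ≠ ζ.1 ∧ α.2 ≠ ζ.2),
      ((1 - tt ^ (1 + leg μ α) * qq ^ (-(arm μ α))) *
        (1 - tt ^ (-(leg μ α)) * qq ^ (1 + arm μ α)))) *
    (∏ α ∈ μ.cells.filter (fun α => α.1 = ζ.1 ∧ α ≠ ζ),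
      ((1 - tt ^ (1 + leg μ α) * qq ^ (-(arm μ α))) *
        (1 - tt ^ (-(leg μ α)) * qq ^ (arm μ α)))) *
    (∏ α ∈ μ.cells.filter (fun α => α.2 = ζ.2 ∧ α ≠ ζ),
      ((1 - tt ^ (-(leg μ α)) * qq ^ (1 + arm μ α)) *
        (1 - tt ^ (leg μ α) * qq ^ (-(arm μ α)))))

lemma qq_ne_zero : qq ≠ 0 := by
  simp only [qq, ne_eq, map_eq_zero_iff _ (IsFractionRing.injective (MvPolynomial (Fin 2) ℚ) K)]
  exact X_ne_zero 0

lemma tt_ne_zero : tt ≠ 0 := by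
  simp only [tt, ne_eq, map_eq_zero_iff _ (IsFractionRing.injective (MvPolynomial (Fin 2) ℚ) K)]
  exact X_ne_zero 1

lemma indep_nat {a b c d : ℕ} (h : qq ^ a * tt ^ b = qq ^ c * tt ^ d) : a = c ∧ b = d := by
  have h2 : (algebraMap (MvPolynomial (Fin 2) ℚ) K) (X 0 ^ a * X 1 ^ b) =
      (algebraMap (MvPolynomial (Fin 2) ℚ) K) (X 0 ^ c * X 1 ^ d) := by
    simpa [map_mul, map_pow, qq, tt] using h
  have h3 := IsFractionRing.injective (MvPolynomial (Fin 2) ℚ) K h2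
  simp only [X_pow_eq_monomial, monomial_mul, one_mul] at h3
  rw [monomial_eq_monomial_iff] at h3
  rcases h3 with ⟨hs, _⟩ | ⟨h1, _⟩
  · constructor
    · have := congrArg (fun f => f 0) hs
      simpa [Finsupp.single_apply] using this
    · have := congrArg (fun f => f 1) hs
      simpa [Finsupp.single_apply] using this
  · norm_num at h1

lemma indep_int {m n : ℤ} (h : qq ^ m * tt ^ n = 1) : m = 0 ∧ n = 0 := by
  have key : qq ^ ((m.toNat : ℤ)) * tt ^ ((n.toNat : ℤ)) =
      qq ^ (((-m).toNat : ℤ)) * tt ^ (((-n).toNat : ℤ)) := by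
    have e1 : (m.toNat : ℤ) = m + (-m).toNat := by omega
    have e2 : (n.toNat : ℤ) = n + (-n).toNat := by omega
    rw [e1, e2, zpow_add₀ qq_ne_zero, zpow_add₀ tt_ne_zero]
    calc qq ^ m * qq ^ (((-m).toNat : ℤ)) * (tt ^ n * tt ^ (((-n).toNat : ℤ)))
        = (qq ^ m * tt ^ n) * (qq ^ (((-m).toNat : ℤ)) * tt ^ (((-n).toNat : ℤ))) := by ring
      _ = qq ^ (((-m).toNat : ℤ)) * tt ^ (((-n).toNat : ℤ)) := by rw [h, one_mul]
  rw [zpow_natCast, zpow_natCast, zpow_natCast, zpow_natCast] at key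
  have := indep_nat key
  omega

lemma one_sub_ne {x y : ℤ} (h : ¬(x = 0 ∧ y = 0)) : 1 - tt ^ x * qq ^ y ≠ 0 := by
  intro hc
  have h1 : qq ^ y * tt ^ x = 1 := by
    rw [mul_comm]; exact (sub_eq_zero.mp hc).symm
  exact h ⟨(indep_int h1).2, (indep_int h1).1⟩

lemma qt_sub_ne {a b : ℤ} (hb : b ≠ 0) : qq ^ a - tt ^ b ≠ 0 := by
  intro hc
  have h1 : qq ^ a * tt ^ (-b) = 1 := by
    rw [zpow_neg, mul_inv_eq_one₀ (zpow_ne_zero _ tt_ne_zero)]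
    exact sub_eq_zero.mp hc
  exact hb (by have := (indep_int h1).2; omega)

lemma tq_sub_ne {a b : ℤ} (hb : b ≠ 0) : tt ^ a - qq ^ b ≠ 0 := by
  intro hc
  have h1 : qq ^ b * tt ^ (-a) = 1 := by
    rw [zpow_neg, mul_inv_eq_one₀ (zpow_ne_zero _ tt_ne_zero)]
    exact (sub_eq_zero.mp hc).symm
  exact hb ((indep_int h1).1)

lemma one_sub_tt_ne : (1 : K) - tt ≠ 0 := by
  have := one_sub_ne (x := 1) (y := 0) (by omega)
  simpa using this

lemma one_sub_qq_ne : (1 : K) - qq ≠ 0 := by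
  have := one_sub_ne (x := 0) (y := 1) (by omega)
  simpa using this

lemma rowFactor (a l : ℤ) (hden : qq ^ a - tt ^ (l + 1) ≠ 0) :
    (1 - tt ^ (1 + l) * qq ^ (-(a - 1))) * (1 - tt ^ (-l) * qq ^ (1 + (a - 1)))
      = qq * ((qq ^ (a - 1) - tt ^ (l + 1)) / (qq ^ a - tt ^ (l + 1))) *
        ((1 - tt ^ (1 + l) * qq ^ (-a)) * (1 - tt ^ (-l) * qq ^ a)) := by
  have hq := qq_ne_zero; have ht := tt_ne_zero
  have hu : tt ^ l ≠ 0 := zpow_ne_zero _ ht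
  have hv : qq ^ a ≠ 0 := zpow_ne_zero _ hq
  rw [show (1 : ℤ) + (a - 1) = a by ring]
  simp only [sub_eq_add_neg, zpow_add₀ ht, zpow_add₀ hq, zpow_one, zpow_neg] at hden ⊢
  set u := tt ^ l
  set v := qq ^ a
  have hden' : v - tt * u ≠ 0 := by rwa [sub_eq_add_neg, mul_comm tt u]
  field_simp
  linear_combination (-(v * tt * u * qq + v * u - v ^ 2 - tt * u ^ 2 * qq)) * mul_inv_cancel₀ hden'

lemma colFactor (a l : ℤ) (hden : tt ^ l - qq ^ (a + 1) ≠ 0) :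
    (1 - tt ^ (1 + (l - 1)) * qq ^ (-a)) * (1 - tt ^ (-(l - 1)) * qq ^ (1 + a))
      = tt * ((tt ^ (l - 1) - qq ^ (a + 1)) / (tt ^ l - qq ^ (a + 1))) *
        ((1 - tt ^ (-l) * qq ^ (1 + a)) * (1 - tt ^ l * qq ^ (-a))) := by
  have hq := qq_ne_zero; have ht := tt_ne_zero
  have hu : tt ^ l ≠ 0 := zpow_ne_zero _ ht
  have hv : qq ^ a ≠ 0 := zpow_ne_zero _ hq
  rw [show (1 : ℤ) + (l - 1) = l by ring]
  simp only [sub_eq_add_neg, zpow_add₀ ht, zpow_add₀ hq, zpow_one, zpow_neg] at hden ⊢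
  set u := tt ^ l
  set v := qq ^ a
  field_simp

section YD
variable {μ ν : YoungDiagram} {ζ : ℕ × ℕ}

lemma nat_len_eq {m n : ℕ} (h : ∀ k, k < m ↔ k < n) : m = n :=
  le_antisymm
    (by by_contra hc; push_neg at hc; exact lt_irrefl n ((h n).mp hc))
    (by by_contra hc; push_neg at hc; exact lt_irrefl m ((h m).mpr hc))

lemma arm_nonneg {α : ℕ × ℕ} (h : α ∈ μ) : 0 ≤ arm μ α := by
  have h1 : α.2 < μ.rowLen α.1 :=
    YoungDiagram.mem_iff_lt_rowLen.mp (by rwa [Prod.mk.eta])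
  simp only [arm]; omega

lemma leg_nonneg {α : ℕ × ℕ} (h : α ∈ μ) : 0 ≤ leg μ α := by
  have h1 : α.1 < μ.colLen α.2 :=
    YoungDiagram.mem_iff_lt_colLen.mp (by rwa [Prod.mk.eta])
  simp only [leg]; omega

lemma rowLen_corner (hζ : IsCornerCell μ ζ) : μ.rowLen ζ.1 = ζ.2 + 1 := by
  obtain ⟨hm, ha, -⟩ := hζ
  have h1 : ζ.2 < μ.rowLen ζ.1 :=
    YoungDiagram.mem_iff_lt_rowLen.mp (by rwa [Prod.mk.eta])
  simp only [arm] at ha; omega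

lemma colLen_corner (hζ : IsCornerCell μ ζ) : μ.colLen ζ.2 = ζ.1 + 1 := by
  obtain ⟨hm, -, hl⟩ := hζ
  have h1 : ζ.1 < μ.colLen ζ.2 :=
    YoungDiagram.mem_iff_lt_colLen.mp (by rwa [Prod.mk.eta])
  simp only [leg] at hl; omega

lemma mem_nu (hν : ν.cells = μ.cells.erase ζ) {c : ℕ × ℕ} :
    c ∈ ν ↔ c ∈ μ ∧ c ≠ ζ := by
  rw [← YoungDiagram.mem_cells, hν, Finset.mem_erase, YoungDiagram.mem_cells, and_comm]

lemma rowLen_nu_ne (hν : ν.cells = μ.cells.erase ζ) {r : ℕ} (hr : r ≠ ζ.1) :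
    ν.rowLen r = μ.rowLen r := by
  apply nat_len_eq; intro k
  rw [← YoungDiagram.mem_iff_lt_rowLen, ← YoungDiagram.mem_iff_lt_rowLen, mem_nu hν]
  have hne : ((r, k) : ℕ × ℕ) ≠ ζ := fun h => hr (congrArg Prod.fst h)
  tauto

lemma colLen_nu_ne (hν : ν.cells = μ.cells.erase ζ) {c : ℕ} (hc : c ≠ ζ.2) :
    ν.colLen c = μ.colLen c := by
  apply nat_len_eq; intro k
  rw [← YoungDiagram.mem_iff_lt_colLen, ← YoungDiagram.mem_iff_lt_colLen, mem_nu hν]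
  have hne : ((k, c) : ℕ × ℕ) ≠ ζ := fun h => hc (congrArg Prod.snd h)
  tauto

lemma rowLen_nu_eq (hν : ν.cells = μ.cells.erase ζ) (hζ : IsCornerCell μ ζ) :
    ν.rowLen ζ.1 = ζ.2 := by
  have hrow := rowLen_corner hζ
  apply nat_len_eq; intro k
  have h := mem_nu (c := (ζ.1, k)) hν
  rw [YoungDiagram.mem_iff_lt_rowLen, YoungDiagram.mem_iff_lt_rowLen, hrow] at h
  simp only [ne_eq, Prod.ext_iff, true_and, and_true] at h
  rw [h]; omega

lemma colLen_nu_eq (hν : ν.cells = μ.cells.erase ζ) (hζ : IsCornerCell μ ζ) :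
    ν.colLen ζ.2 = ζ.1 := by
  have hcol := colLen_corner hζ
  apply nat_len_eq; intro k
  have h := mem_nu (c := (k, ζ.2)) hν
  rw [YoungDiagram.mem_iff_lt_colLen, YoungDiagram.mem_iff_lt_colLen, hcol] at h
  simp only [ne_eq, Prod.ext_iff, true_and, and_true] at h
  rw [h]; omega

lemma F2_eq (hζ : IsCornerCell μ ζ) :
    μ.cells.filter (fun α => α.1 = ζ.1 ∧ α ≠ ζ)
      = (Finset.range ζ.2).image (fun c => (ζ.1, c)) := by
  have hrow := rowLen_corner hζ
  ext α
  simp only [Finset.mem_filter, Finset.mem_image, Finset.mem_range,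
    YoungDiagram.mem_cells, ne_eq, Prod.ext_iff]
  constructor
  · rintro ⟨hm, h1, hne⟩
    have h2 : α.2 < μ.rowLen α.1 :=
      YoungDiagram.mem_iff_lt_rowLen.mp (by rwa [Prod.mk.eta])
    rw [h1, hrow] at h2
    exact ⟨α.2, by omega, h1.symm, rfl⟩
  · rintro ⟨c, hc, h1, h2⟩
    have hm : (ζ.1, c) ∈ μ := by
      rw [YoungDiagram.mem_iff_lt_rowLen, hrow]; omega
    have hα : α = (ζ.1, c) := Prod.ext h1.symm h2.symm
    subst hα
    exact ⟨hm, rfl, by simp; omega⟩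

lemma F3_eq (hζ : IsCornerCell μ ζ) :
    μ.cells.filter (fun α => α.2 = ζ.2 ∧ α ≠ ζ)
      = (Finset.range ζ.1).image (fun r => (r, ζ.2)) := by
  have hcol := colLen_corner hζ
  ext α
  simp only [Finset.mem_filter, Finset.mem_image, Finset.mem_range,
    YoungDiagram.mem_cells, ne_eq, Prod.ext_iff]
  constructor
  · rintro ⟨hm, h2, hne⟩
    have h1 : α.1 < μ.colLen α.2 :=
      YoungDiagram.mem_iff_lt_colLen.mp (by rwa [Prod.mk.eta])
    rw [h2, hcol] at h1
    exact ⟨α.1, by omega, rfl, h2.symm⟩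
  · rintro ⟨r, hr, h1, h2⟩
    have hm : (r, ζ.2) ∈ μ := by
      rw [YoungDiagram.mem_iff_lt_colLen, hcol]; omega
    have hα : α = (r, ζ.2) := Prod.ext h1.symm h2.symm
    subst hα
    exact ⟨hm, rfl, by simp; omega⟩

lemma F2_card (hζ : IsCornerCell μ ζ) :
    (μ.cells.filter (fun α => α.1 = ζ.1 ∧ α ≠ ζ)).card = ζ.2 := by
  rw [F2_eq hζ, Finset.card_image_of_injective _ (fun a b h => (Prod.ext_iff.mp h).2),
    Finset.card_range]

lemma F3_card (hζ : IsCornerCell μ ζ) :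
    (μ.cells.filter (fun α => α.2 = ζ.2 ∧ α ≠ ζ)).card = ζ.1 := by
  rw [F3_eq hζ, Finset.card_image_of_injective _ (fun a b h => (Prod.ext_iff.mp h).1),
    Finset.card_range]

end YD

/-- The Pieri coefficient `d_{μν}` satisfies
`t^{l'(ζ)} q^{a'(ζ)} · d_{μν} = (1-t)(1-q) · Π_ν / Π_{μ,ν}`. -/
theorem pieri_d_eq (n : ℕ) (μ ν : YoungDiagram) (hμ : μ.card = n)
    (ζ : ℕ × ℕ) (hζ : IsCornerCell μ ζ) (hν : ν.cells = μ.cells.erase ζ) :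
    tt ^ (ζ.1 : ℤ) * qq ^ (ζ.2 : ℤ) *
      ((∏ α ∈ μ.cells.filter (fun α => α.1 = ζ.1 ∧ α ≠ ζ),
          (qq ^ (arm μ α - 1) - tt ^ (leg μ α + 1)) /
            (qq ^ (arm μ α) - tt ^ (leg μ α + 1))) *
        (∏ α ∈ μ.cells.filter (fun α => α.2 = ζ.2 ∧ α ≠ ζ),
          (tt ^ (leg μ α - 1) - qq ^ (arm μ α + 1)) /
            (tt ^ (leg μ α) - qq ^ (arm μ α + 1)))) =
      (1 - tt) * (1 - qq) * PiMu ν / PiMuNu μ ζ := by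
  classical
  have hrow := rowLen_corner hζ
  have hcol := colLen_corner hζ
  -- arm/leg bounds on the distinguished row and column
  have harm1 : ∀ α ∈ μ.cells.filter (fun α => α.1 = ζ.1 ∧ α ≠ ζ), 1 ≤ arm μ α := by
    intro α hα
    simp only [Finset.mem_filter, YoungDiagram.mem_cells] at hα
    have h2 : α.2 ≠ ζ.2 := fun hh => hα.2.2 (Prod.ext hα.2.1 hh)
    have hlt : α.2 < μ.rowLen α.1 :=
      YoungDiagram.mem_iff_lt_rowLen.mp (by rw [Prod.mk.eta]; exact hα.1)
    rw [hα.2.1, hrow] at hlt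
    simp only [arm]; rw [hα.2.1, hrow]; omega
  have hleg1 : ∀ α ∈ μ.cells.filter (fun α => α.2 = ζ.2 ∧ α ≠ ζ), 1 ≤ leg μ α := by
    intro α hα
    simp only [Finset.mem_filter, YoungDiagram.mem_cells] at hα
    have h2 : α.1 ≠ ζ.1 := fun hh => hα.2.2 (Prod.ext hh hα.2.1)
    have hlt : α.1 < μ.colLen α.2 :=
      YoungDiagram.mem_iff_lt_colLen.mp (by rw [Prod.mk.eta]; exact hα.1)
    rw [hα.2.1, hcol] at hlt
    simp only [leg]; rw [hα.2.1, hcol]; omega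
  -- set identities for the filters
  have e2 : (μ.cells.erase ζ).filter (fun α => α.1 = ζ.1)
      = μ.cells.filter (fun α => α.1 = ζ.1 ∧ α ≠ ζ) := by
    ext α
    simp only [Finset.mem_filter, Finset.mem_erase, ne_eq]
    tauto
  have enot : (μ.cells.erase ζ).filter (fun α => ¬ α.1 = ζ.1)
      = μ.cells.filter (fun α => ¬ α.1 = ζ.1) := by
    ext α
    simp only [Finset.mem_filter, Finset.mem_erase, ne_eq]
    constructor
    · rintro ⟨⟨-, h1⟩, h2⟩; exact ⟨h1, h2⟩
    · rintro ⟨h1, h2⟩; exact ⟨⟨fun hh => h2 (by rw [hh]), h1⟩, h2⟩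
  have e3 : ((μ.cells.filter (fun α => ¬ α.1 = ζ.1)).filter (fun α => α.2 = ζ.2))
      = μ.cells.filter (fun α => α.2 = ζ.2 ∧ α ≠ ζ) := by
    rw [Finset.filter_filter]
    ext α
    simp only [Finset.mem_filter, ne_eq]
    constructor
    · rintro ⟨hm, h1, h2⟩
      exact ⟨hm, h2, fun hh => h1 (congrArg Prod.fst hh)⟩
    · rintro ⟨hm, h2, hne⟩
      exact ⟨hm, fun h1 => hne (Prod.ext h1 h2), h2⟩
  have e1 : ((μ.cells.filter (fun α => ¬ α.1 = ζ.1)).filter (fun α => ¬ α.2 = ζ.2))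
      = μ.cells.filter (fun α => α.1 ≠ ζ.1 ∧ α.2 ≠ ζ.2) := by
    rw [Finset.filter_filter]
  -- pointwise identities on the three pieces
  have c1 : (∏ α ∈ μ.cells.filter (fun α => α.1 ≠ ζ.1 ∧ α.2 ≠ ζ.2),
        ((1 - tt ^ (1 + leg ν α) * qq ^ (-(arm ν α))) *
          (1 - tt ^ (-(leg ν α)) * qq ^ (1 + arm ν α))))
      = ∏ α ∈ μ.cells.filter (fun α => α.1 ≠ ζ.1 ∧ α.2 ≠ ζ.2),
        ((1 - tt ^ (1 + leg μ α) * qq ^ (-(arm μ α))) *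
          (1 - tt ^ (-(leg μ α)) * qq ^ (1 + arm μ α))) := by
    refine Finset.prod_congr rfl fun α hα => ?_
    simp only [Finset.mem_filter, YoungDiagram.mem_cells, ne_eq] at hα
    have ha : arm ν α = arm μ α := by
      simp only [arm]; rw [rowLen_nu_ne hν hα.2.1]
    have hl : leg ν α = leg μ α := by
      simp only [leg]; rw [colLen_nu_ne hν hα.2.2]
    rw [ha, hl]
  have c2 : (∏ α ∈ μ.cells.filter (fun α => α.1 = ζ.1 ∧ α ≠ ζ),
        ((1 - tt ^ (1 + leg ν α) * qq ^ (-(arm ν α))) *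
          (1 - tt ^ (-(leg ν α)) * qq ^ (1 + arm ν α))))
      = ∏ α ∈ μ.cells.filter (fun α => α.1 = ζ.1 ∧ α ≠ ζ),
        (qq * ((qq ^ (arm μ α - 1) - tt ^ (leg μ α + 1)) /
            (qq ^ (arm μ α) - tt ^ (leg μ α + 1))) *
          ((1 - tt ^ (1 + leg μ α) * qq ^ (-(arm μ α))) *
            (1 - tt ^ (-(leg μ α)) * qq ^ (arm μ α)))) := by
    refine Finset.prod_congr rfl fun α hα => ?_
    have ha1 := harm1 α hα
    simp only [Finset.mem_filter, YoungDiagram.mem_cells] at hα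
    have h2 : α.2 ≠ ζ.2 := fun hh => hα.2.2 (Prod.ext hα.2.1 hh)
    have hlegnn := leg_nonneg hα.1
    have ha : arm ν α = arm μ α - 1 := by
      simp only [arm]; rw [hα.2.1, rowLen_nu_eq hν hζ, hrow]; push_cast; ring
    have hl : leg ν α = leg μ α := by
      simp only [leg]; rw [colLen_nu_ne hν h2]
    rw [ha, hl]
    exact rowFactor (arm μ α) (leg μ α) (qt_sub_ne (by omega))
  have c3 : (∏ α ∈ μ.cells.filter (fun α => α.2 = ζ.2 ∧ α ≠ ζ),
        ((1 - tt ^ (1 + leg ν α) * qq ^ (-(arm ν α))) *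
          (1 - tt ^ (-(leg ν α)) * qq ^ (1 + arm ν α))))
      = ∏ α ∈ μ.cells.filter (fun α => α.2 = ζ.2 ∧ α ≠ ζ),
        (tt * ((tt ^ (leg μ α - 1) - qq ^ (arm μ α + 1)) /
            (tt ^ (leg μ α) - qq ^ (arm μ α + 1))) *
          ((1 - tt ^ (-(leg μ α)) * qq ^ (1 + arm μ α)) *
            (1 - tt ^ (leg μ α) * qq ^ (-(arm μ α))))) := by
    refine Finset.prod_congr rfl fun α hα => ?_
    have hl1 := hleg1 α hα
    simp only [Finset.mem_filter, YoungDiagram.mem_cells] at hα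
    have h1 : α.1 ≠ ζ.1 := fun hh => hα.2.2 (Prod.ext hh hα.2.1)
    have harmnn := arm_nonneg hα.1
    have ha : arm ν α = arm μ α := by
      simp only [arm]; rw [rowLen_nu_ne hν h1]
    have hl : leg ν α = leg μ α - 1 := by
      simp only [leg]; rw [hα.2.1, colLen_nu_eq hν hζ, hcol]; push_cast; ring
    rw [ha, hl]
    exact colFactor (arm μ α) (leg μ α) (tq_sub_ne (by omega))
  -- non-vanishing of the denominator
  have hne : PiMuNu μ ζ ≠ 0 := by
    simp only [PiMuNu]
    refine mul_ne_zero (mul_ne_zero (mul_ne_zero (mul_ne_zero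
      one_sub_tt_ne one_sub_qq_ne) ?_) ?_) ?_
    · rw [Finset.prod_ne_zero_iff]
      intro α hα
      simp only [Finset.mem_filter, YoungDiagram.mem_cells] at hα
      have h1 := leg_nonneg hα.1
      have h2 := arm_nonneg hα.1
      exact mul_ne_zero (one_sub_ne (by omega)) (one_sub_ne (by omega))
    · rw [Finset.prod_ne_zero_iff]
      intro α hα
      have ha1 := harm1 α hα
      simp only [Finset.mem_filter, YoungDiagram.mem_cells] at hα
      have h1 := leg_nonneg hα.1
      exact mul_ne_zero (one_sub_ne (by omega)) (one_sub_ne (by omega))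
    · rw [Finset.prod_ne_zero_iff]
      intro α hα
      have hl1 := hleg1 α hα
      simp only [Finset.mem_filter, YoungDiagram.mem_cells] at hα
      have h2 := arm_nonneg hα.1
      exact mul_ne_zero (one_sub_ne (by omega)) (one_sub_ne (by omega))
  rw [eq_div_iff hne]
  simp only [PiMu, PiMuNu, hν]
  rw [← Finset.prod_filter_mul_prod_filter_not (μ.cells.erase ζ) (fun α => α.1 = ζ.1),
    e2, enot,
    ← Finset.prod_filter_mul_prod_filter_not (μ.cells.filter (fun α => ¬ α.1 = ζ.1))
      (fun α => α.2 = ζ.2),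
    e3, e1, c1, c2, c3]
  simp only [Finset.prod_mul_distrib, Finset.prod_const, F2_card hζ, F3_card hζ]
  rw [show qq ^ ((ζ.2 : ℕ) : ℤ) = qq ^ (ζ.2 : ℕ) from zpow_natCast qq ζ.2,
    show tt ^ ((ζ.1 : ℕ) : ℤ) = tt ^ (ζ.1 : ℕ) from zpow_natCast tt ζ.1]
  ring
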